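/- Let M be a maximal matching of a finite simple graph G = (V, E), let B be a set of edges on V disjoint from E, and let G' = (V, E ∪ B). Let S be the set of edges {u, v} ∈ B such that both u and v are unmatched by M, and let M' be any maximal matching of the graph (V, S). Then M ∪ M' is a maximal matching of G'. -/

import Mathlib

/-- `M` is a matching of `G`, viewed as a set of edges: `M ⊆ E(G)` and the edges of `M` are
pairwise vertex-disjoint. -/
def EdgeMatching {V : Type} (G : SimpleGraph V) (M : Set (Sym2 V)) : Prop :=
  M ⊆ G.edgeSet ∧ ∀ e ∈ M, ∀ f ∈ M, e ≠ f → ∀ v : V, v ∈ e → v ∉ f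

/-- `v` is matched by the edge set `M`. -/
def MatchedBy {V : Type} (M : Set (Sym2 V)) (v : V) : Prop := ∃ e ∈ M, v ∈ e

/-- `M` is a maximal matching of `G`: a matching such that no edge of `G` can be added,
i.e. every edge of `G` has a matched endpoint. -/
def MaximalEdgeMatching {V : Type} (G : SimpleGraph V) (M : Set (Sym2 V)) : Prop :=
  EdgeMatching G M ∧ ∀ u v : V, G.Adj u v → MatchedBy M u ∨ MatchedBy M v

/-- Let `M` be a maximal matching of `G = (V, E)`, let `B` be a set of
(non-loop) edges on `V` disjoint from `E`, and let `G' = (V, E ∪ B)`.  Let `S` be the set of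
edges of `B` both of whose endpoints are unmatched by `M`, and let `M'` be any maximal matching
of `(V, S)`.  Then `M ∪ M'` is a maximal matching of `G'`. -/
theorem maximal_matching_batch_insert
    {V : Type} (G : SimpleGraph V) (M : Set (Sym2 V)) (hM : MaximalEdgeMatching G M)
    (B : Set (Sym2 V)) (hBloop : ∀ e ∈ B, ¬ e.IsDiag) (hBnew : Disjoint B G.edgeSet)
    (M' : Set (Sym2 V))
    (hM' : MaximalEdgeMatching
      (SimpleGraph.fromEdgeSet {e ∈ B | ∀ v : V, v ∈ e → ¬ MatchedBy M v}) M') :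
    MaximalEdgeMatching (SimpleGraph.fromEdgeSet (G.edgeSet ∪ B)) (M ∪ M') := by
  obtain ⟨⟨hMsub, hMdisj⟩, hMmax⟩ := hM
  obtain ⟨⟨hM'sub, hM'disj⟩, hM'max⟩ := hM'
  -- M' ⊆ S
  have hM'S : ∀ e ∈ M', e ∈ B ∧ ∀ v : V, v ∈ e → ¬ MatchedBy M v := by
    intro e he
    have := hM'sub he
    rw [SimpleGraph.edgeSet_fromEdgeSet] at this
    exact this.1
  constructor
  · constructor
    · intro e he
      rw [SimpleGraph.edgeSet_fromEdgeSet]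
      rcases he with he | he
      · exact ⟨Or.inl (hMsub he), (G.not_isDiag_of_mem_edgeSet (hMsub he))⟩
      · exact ⟨Or.inr (hM'S e he).1, hBloop e (hM'S e he).1⟩
    · intro e he f hf hef v hve hvf
      rcases he with he | he <;> rcases hf with hf | hf
      · exact hMdisj e he f hf hef v hve hvf
      · exact (hM'S f hf).2 v hvf ⟨e, he, hve⟩
      · exact (hM'S e he).2 v hve ⟨f, hf, hvf⟩
      · exact hM'disj e he f hf hef v hve hvf
  · intro u v huv
    rw [SimpleGraph.fromEdgeSet_adj] at huv
    obtain ⟨hmem, hne⟩ := huv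
    rcases hmem with hmem | hmem
    · rcases hMmax u v hmem with ⟨e, he, hu⟩ | ⟨e, he, hv⟩
      · exact Or.inl ⟨e, Or.inl he, hu⟩
      · exact Or.inr ⟨e, Or.inl he, hv⟩
    · by_cases hu : MatchedBy M u
      · obtain ⟨e, he, hu⟩ := hu; exact Or.inl ⟨e, Or.inl he, hu⟩
      · by_cases hv : MatchedBy M v
        · obtain ⟨e, he, hv⟩ := hv; exact Or.inr ⟨e, Or.inl he, hv⟩
        · have hadj : (SimpleGraph.fromEdgeSet {e ∈ B | ∀ w : V, w ∈ e → ¬ MatchedBy M w}).Adj u v := by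
            rw [SimpleGraph.fromEdgeSet_adj]
            refine ⟨⟨hmem, ?_⟩, hne⟩
            intro w hw
            rcases Sym2.mem_iff.mp hw with rfl | rfl
            · exact hu
            · exact hv
          rcases hM'max u v hadj with ⟨e, he, h⟩ | ⟨e, he, h⟩
          · exact Or.inl ⟨e, Or.inr he, h⟩
          · exact Or.inr ⟨e, Or.inr he, h⟩
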